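/- Let f(X) = −log det X + tr(SX) + ‖X‖_{1,Λ} where S is positive semidefinite with positive diagonal entries and Λ has positive off-diagonal entries bounded below by λ > 0. Then for any f(X₀) ∈ ℝ, the level set U = {X ≻ 0 : f(X) ≤ f(X₀)} is contained in {X : mI ⪯ X ⪯ MI} for some constants 0 < m ≤ M depending only on f(X₀), λ, min_i S_{ii}, max_{i≠j}|S_{ij}| and p. -/

import Mathlib

open Matrix BigOperators

/-- Weighted elementwise ℓ1 norm `‖X‖_{1,Λ} = Σᵢⱼ Λᵢⱼ|Xᵢⱼ|`. -/
noncomputable def norm1 {p : ℕ} (Λ X : Matrix (Fin p) (Fin p) ℝ) : ℝ :=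
  ∑ i, ∑ j, Λ i j * |X i j|

/-- The regularized negative log-likelihood `f(X) = −log det X + tr(SX) + ‖X‖_{1,Λ}`. -/
noncomputable def fobj {p : ℕ} (S Λ X : Matrix (Fin p) (Fin p) ℝ) : ℝ :=
  -Real.log X.det + Matrix.trace (S * X) + norm1 Λ X

lemma psd_diag_nonneg {p : ℕ} {X : Matrix (Fin p) (Fin p) ℝ} (hX : X.PosSemidef) (i : Fin p) :
    0 ≤ X i i := by
  exact hX.diag_nonneg

lemma trace_mul_psd_nonneg {p : ℕ} {S X : Matrix (Fin p) (Fin p) ℝ}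
    (hS : S.PosSemidef) (hX : X.PosSemidef) : 0 ≤ Matrix.trace (S * X) := by
  obtain ⟨B, rfl⟩ : ∃ B : Matrix (Fin p) (Fin p) ℝ, S = Bᴴ * B :=
    by open scoped MatrixOrder in exact CStarAlgebra.nonneg_iff_eq_star_mul_self.mp hS.nonneg
  rw [← Matrix.trace_mul_cycle B X Bᴴ]
  have h := hX.mul_mul_conjTranspose_same B
  exact Finset.sum_nonneg fun i _ => psd_diag_nonneg h i

lemma key_log {a d : ℝ} (ha : 0 < a) (hd : 0 < d) :
    1 + Real.log a ≤ -Real.log d + a * d := by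
  have h := Real.log_le_sub_one_of_pos (mul_pos ha hd)
  rw [Real.log_mul ha.ne' hd.ne'] at h
  linarith

lemma sub_smul_one_psd {p : ℕ} {X : Matrix (Fin p) (Fin p) ℝ} (hX : X.IsHermitian) (m : ℝ)
    (h : ∀ i, m ≤ hX.eigenvalues i) :
    (X - m • (1 : Matrix (Fin p) (Fin p) ℝ)).PosSemidef := by
  set U : Matrix (Fin p) (Fin p) ℝ := (hX.eigenvectorUnitary : Matrix (Fin p) (Fin p) ℝ) with hUdef
  have hU : U * star U = 1 := Matrix.mem_unitaryGroup_iff.mp hX.eigenvectorUnitary.2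
  have key : X - m • (1 : Matrix (Fin p) (Fin p) ℝ)
      = U * diagonal (fun i => hX.eigenvalues i - m) * star U := by
    have hdiag : (diagonal (fun i => hX.eigenvalues i - m) : Matrix (Fin p) (Fin p) ℝ)
        = diagonal (RCLike.ofReal ∘ hX.eigenvalues) - m • 1 := by
      ext i j
      by_cases hij : i = j <;> simp [hij, Matrix.one_apply, diagonal]
    rw [hdiag, Matrix.mul_sub, Matrix.sub_mul, Matrix.mul_smul, Matrix.smul_mul, Matrix.mul_one,
      hU, ← Unitary.conjStarAlgAut_apply (S := ℝ), ← hX.spectral_theorem]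
  rw [key]
  exact (Matrix.PosSemidef.diagonal (fun i => sub_nonneg.mpr (h i))).mul_mul_conjTranspose_same U

lemma smul_one_sub_psd {p : ℕ} {X : Matrix (Fin p) (Fin p) ℝ} (hX : X.IsHermitian) (M : ℝ)
    (h : ∀ i, hX.eigenvalues i ≤ M) :
    (M • (1 : Matrix (Fin p) (Fin p) ℝ) - X).PosSemidef := by
  set U : Matrix (Fin p) (Fin p) ℝ := (hX.eigenvectorUnitary : Matrix (Fin p) (Fin p) ℝ) with hUdef
  have hU : U * star U = 1 := Matrix.mem_unitaryGroup_iff.mp hX.eigenvectorUnitary.2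
  have key : M • (1 : Matrix (Fin p) (Fin p) ℝ) - X
      = U * diagonal (fun i => M - hX.eigenvalues i) * star U := by
    have hdiag : (diagonal (fun i => M - hX.eigenvalues i) : Matrix (Fin p) (Fin p) ℝ)
        = M • 1 - diagonal (RCLike.ofReal ∘ hX.eigenvalues) := by
      ext i j
      by_cases hij : i = j <;> simp [hij, Matrix.one_apply, diagonal]
    rw [hdiag, Matrix.mul_sub, Matrix.sub_mul, Matrix.mul_smul, Matrix.smul_mul, Matrix.mul_one,
      hU, ← Unitary.conjStarAlgAut_apply (S := ℝ), ← hX.spectral_theorem]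
  rw [key]
  exact (Matrix.PosSemidef.diagonal (fun i => sub_nonneg.mpr (h i))).mul_mul_conjTranspose_same U

lemma trace_eq_sum_eigenvalues' {p : ℕ} {X : Matrix (Fin p) (Fin p) ℝ} (hX : X.IsHermitian) :
    Matrix.trace X = ∑ i, hX.eigenvalues i := by
  conv_lhs => rw [hX.spectral_theorem, Unitary.conjStarAlgAut_apply]
  have hU : star (hX.eigenvectorUnitary : Matrix (Fin p) (Fin p) ℝ)
      * (hX.eigenvectorUnitary : Matrix (Fin p) (Fin p) ℝ) = 1 :=
    Matrix.mem_unitaryGroup_iff'.mp hX.eigenvectorUnitary.2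
  rw [Matrix.trace_mul_cycle, hU, Matrix.one_mul, Matrix.trace_diagonal]
  simp

/-- If `S ⪰ 0` has positive diagonal and the off-diagonal entries
of `Λ` are bounded below by `λ > 0` (diagonal entries nonnegative), then for any
level `c = f(X₀)` the level set `{X ≻ 0 : f(X) ≤ c}` is contained in
`{X : mI ⪯ X ⪯ MI}` for some constants `0 < m ≤ M`. -/
theorem level_set_eigenvalue_bounds {p : ℕ} (S Λ : Matrix (Fin p) (Fin p) ℝ)
    (hS : S.PosSemidef) (hSd : ∀ i, 0 < S i i)
    (hΛs : Λ.IsSymm) (lam : ℝ) (hlam : 0 < lam)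
    (hΛoff : ∀ i j, i ≠ j → lam ≤ Λ i j) (hΛd : ∀ i, 0 ≤ Λ i i) (c : ℝ) :
    ∃ m M : ℝ, 0 < m ∧ m ≤ M ∧
      ∀ X : Matrix (Fin p) (Fin p) ℝ, X.PosDef → fobj S Λ X ≤ c →
        (X - m • (1 : Matrix (Fin p) (Fin p) ℝ)).PosSemidef ∧
          (M • (1 : Matrix (Fin p) (Fin p) ℝ) - X).PosSemidef := by
  rcases Nat.eq_zero_or_pos p with hp | hp
  · subst hp
    refine ⟨1, 1, one_pos, le_refl 1, fun X _ _ => ?_⟩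
    constructor <;>
      exact ⟨by ext i j; exact i.elim0, fun x => by simp [Finsupp.sum, Finset.eq_empty_of_isEmpty]⟩
  · have huniv : (Finset.univ : Finset (Fin p)).Nonempty := by
      haveI : NeZero p := ⟨hp.ne'⟩
      exact Finset.univ_nonempty
    set smin := Finset.univ.inf' huniv (fun i => S i i) with hsmin
    have hsmin_pos : 0 < smin := by
      rw [hsmin, Finset.lt_inf'_iff]
      exact fun i _ => hSd i
    have hsmin_le : ∀ i, smin ≤ S i i := fun i => Finset.inf'_le _ (Finset.mem_univ i)
    set K := (∑ i, ∑ j, |S i j|) + lam with hK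
    have hsum_nonneg : 0 ≤ ∑ i, ∑ j, |S i j| :=
      Finset.sum_nonneg fun i _ => Finset.sum_nonneg fun j _ => abs_nonneg _
    have hKpos : 0 < K := by rw [hK]; linarith
    have hSK : ∀ i j, |S i j| ≤ K := by
      intro i j
      have h1 : |S i j| ≤ ∑ j', |S i j'| :=
        Finset.single_le_sum (f := fun j' => |S i j'|) (fun j' _ => abs_nonneg _)
          (Finset.mem_univ j)
      have h2 : ∑ j', |S i j'| ≤ ∑ i', ∑ j', |S i' j'| :=
        Finset.single_le_sum (f := fun i' => ∑ j', |S i' j'|)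
          (fun i' _ => Finset.sum_nonneg fun j' _ => abs_nonneg _) (Finset.mem_univ i)
      rw [hK]; linarith
    set t := lam / K with ht
    have ht0 : 0 < t := div_pos hlam hKpos
    have ht1 : t ≤ 1 := by
      rw [ht, div_le_one hKpos, hK]; linarith
    have htK : t * K = lam := div_mul_cancel₀ lam hKpos.ne'
    set ε := t * smin with hε
    have hεpos : 0 < ε := mul_pos ht0 hsmin_pos
    set B := c - ((p : ℝ) - 1) * (1 + Real.log ε) with hB
    refine ⟨Real.exp (-B), max (Real.exp (-B)) ((2 / ε) * (B - (1 + Real.log (ε / 2)))),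
      Real.exp_pos _, le_max_left _ _, ?_⟩
    intro X hX hfc
    set d := hX.1.eigenvalues with hd
    have hdpos : ∀ i, 0 < d i := hX.eigenvalues_pos
    set off := ∑ i, ∑ j, (if i = j then (0 : ℝ) else |X i j|) with hoff
    have hoff_nonneg : 0 ≤ off := by
      rw [hoff]
      refine Finset.sum_nonneg fun i _ => Finset.sum_nonneg fun j _ => ?_
      split <;> simp [abs_nonneg]
    have hnorm1 : lam * off ≤ norm1 Λ X := by
      rw [hoff, Finset.mul_sum, norm1]
      refine Finset.sum_le_sum fun i _ => ?_
      rw [Finset.mul_sum]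
      refine Finset.sum_le_sum fun j _ => ?_
      by_cases hij : i = j
      · simp [hij]
        exact mul_nonneg (hΛd j) (abs_nonneg _)
      · rw [if_neg hij]
        exact mul_le_mul_of_nonneg_right (hΛoff i j hij) (abs_nonneg _)
    have hXsymm : ∀ i j, X j i = X i j := fun i j => by
      have := hX.1.apply i j; simpa using this
    have hdiagX : ∀ i, 0 ≤ X i i := fun i => psd_diag_nonneg hX.posSemidef i
    have htrX : Matrix.trace X = ∑ i, X i i := rfl
    have htrSX : Matrix.trace (S * X) = ∑ i, ∑ j, S i j * X i j := by
      rw [Matrix.trace]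
      refine Finset.sum_congr rfl fun i _ => ?_
      rw [Matrix.diag_apply, Matrix.mul_apply]
      exact Finset.sum_congr rfl fun j _ => by rw [hXsymm i j]
    have hSX_lb : smin * Matrix.trace X - K * off ≤ Matrix.trace (S * X) := by
      have step : ∑ i, ∑ j, (if i = j then smin * X i i else -(K * |X i j|))
          ≤ Matrix.trace (S * X) := by
        rw [htrSX]
        refine Finset.sum_le_sum fun i _ => Finset.sum_le_sum fun j _ => ?_
        by_cases hij : i = j
        · subst hij
          simp only [if_pos rfl]
          exact mul_le_mul_of_nonneg_right (hsmin_le i) (hdiagX i)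
        · rw [if_neg hij]
          have h1 : |S i j * X i j| ≤ K * |X i j| := by
            rw [abs_mul]
            exact mul_le_mul_of_nonneg_right (hSK i j) (abs_nonneg _)
          have h2 := neg_abs_le (S i j * X i j)
          linarith
      have heq : ∑ i, ∑ j, (if i = j then smin * X i i else -(K * |X i j|))
          = smin * Matrix.trace X - K * off := by
        have hsplit : ∀ i j : Fin p, (if i = j then smin * X i i else -(K * |X i j|))
            = (if i = j then smin * X i i else 0) - K * (if i = j then 0 else |X i j|) := by
          intro i j; split <;> simp
        simp_rw [hsplit, Finset.sum_sub_distrib, ← Finset.mul_sum]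
        rw [htrX, hoff, Finset.mul_sum]
        have hfirst : ∀ i : Fin p, (∑ j, if i = j then smin * X i i else (0:ℝ)) = smin * X i i := by
          intro i
          simp [Finset.sum_ite_eq]
        simp_rw [hfirst]
        rw [Finset.mul_sum]
      linarith [heq ▸ step]
    have hSX0 : 0 ≤ Matrix.trace (S * X) := trace_mul_psd_nonneg hS hX.posSemidef
    have e1 : ε * Matrix.trace X ≤ Matrix.trace (S * X) + lam * off := by
      have h5 : t * (smin * Matrix.trace X - K * off) ≤ t * Matrix.trace (S * X) :=
        mul_le_mul_of_nonneg_left hSX_lb ht0.le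
      have h6 : t * Matrix.trace (S * X) ≤ Matrix.trace (S * X) := by nlinarith
      calc ε * Matrix.trace X
          = t * (smin * Matrix.trace X - K * off) + (t * K) * off := by rw [hε]; ring
        _ ≤ Matrix.trace (S * X) + (t * K) * off := by linarith
        _ = Matrix.trace (S * X) + lam * off := by rw [htK]
    have hfc' : -Real.log X.det + Matrix.trace (S * X) + norm1 Λ X ≤ c := hfc
    have hmain : -Real.log X.det + ε * Matrix.trace X ≤ c := by linarith
    have hdet : X.det = ∏ i, d i := by
      rw [hX.1.det_eq_prod_eigenvalues]; simp [hd]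
    have hlogdet : Real.log X.det = ∑ i, Real.log (d i) := by
      rw [hdet]
      exact Real.log_prod fun i _ => (hdpos i).ne'
    have htrXd : Matrix.trace X = ∑ i, d i := trace_eq_sum_eigenvalues' hX.1
    have hsum : ∑ i, (-Real.log (d i) + ε * d i) ≤ c := by
      rw [Finset.sum_add_distrib, Finset.sum_neg_distrib, ← Finset.mul_sum, ← htrXd, ← hlogdet]
      linarith
    have hterm : ∀ k, -Real.log (d k) + ε * d k ≤ B := by
      intro k
      have h1 : ∑ i ∈ Finset.univ.erase k, (-Real.log (d i) + ε * d i)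
          + (-Real.log (d k) + ε * d k) = ∑ i, (-Real.log (d i) + ε * d i) :=
        Finset.sum_erase_add _ _ (Finset.mem_univ k)
      have h2 : ((Finset.univ.erase k).card : ℝ) * (1 + Real.log ε)
          ≤ ∑ i ∈ Finset.univ.erase k, (-Real.log (d i) + ε * d i) := by
        have h2' := Finset.card_nsmul_le_sum (Finset.univ.erase k)
          (fun i => -Real.log (d i) + ε * d i) (1 + Real.log ε)
          (fun i _ => key_log hεpos (hdpos i))
        rw [nsmul_eq_mul] at h2'
        exact h2'
      have hcard : ((Finset.univ.erase k).card : ℝ) = (p : ℝ) - 1 := by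
        rw [Finset.card_erase_of_mem (Finset.mem_univ k), Finset.card_univ, Fintype.card_fin,
          Nat.cast_sub hp]
        simp
      rw [hcard] at h2
      rw [hB]
      linarith
    constructor
    · apply sub_smul_one_psd hX.1
      intro i
      have h3 := hterm i
      have h4 : 0 < ε * d i := mul_pos hεpos (hdpos i)
      have h5 : -B ≤ Real.log (d i) := by linarith
      calc Real.exp (-B) ≤ Real.exp (Real.log (d i)) := Real.exp_le_exp.mpr h5
        _ = d i := Real.exp_log (hdpos i)
    · apply smul_one_sub_psd hX.1
      intro i
      refine le_trans ?_ (le_max_right _ _)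
      have h3 := hterm i
      have h4 := key_log (half_pos hεpos) (hdpos i)
      have h6 : (ε / 2) * d i ≤ B - (1 + Real.log (ε / 2)) := by
        have : -Real.log (d i) + ε * d i
            = (-Real.log (d i) + (ε / 2) * d i) + (ε / 2) * d i := by ring
        linarith [this ▸ h3]
      rw [div_mul_eq_mul_div, le_div_iff₀ hεpos]
      nlinarith
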